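/- In the general demand oligopoly with N ≥ 2 sellers and T ≥ 1, assume a := Σ_{i≥N} q_i > 0, that q_j > 0 for some 1 ≤ j ≤ N−1, and that δ·V(N−i, T−1) < p̄ for every 1 ≤ i ≤ N−1. Then G is continuous and strictly increasing on [0,1]. -/

import Mathlib

noncomputable def stmt14_Zf (n k : ℕ) (x : ℝ) : ℝ :=
  ∑ i ∈ Finset.range (k + 1), (n.choose i : ℝ) * (1 - x) ^ (n - i) * x ^ i

lemma stmt14_Zf_nonneg (n k : ℕ) {x : ℝ} (hx0 : 0 ≤ x) (hx1 : x ≤ 1) :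
    0 ≤ stmt14_Zf n k x := by
  apply Finset.sum_nonneg
  intro i _
  have : (0:ℝ) ≤ 1 - x := by linarith
  positivity

lemma stmt14_elem (n i k : ℕ) (hik : i ≤ k) (hkn : k ≤ n) {x y : ℝ}
    (hx : 0 ≤ x) (hy : y ≤ 1) (hxy : x ≤ y) :
    (1 - y) ^ (n - i) * y ^ i * ((1 - x) ^ (n - k) * x ^ k) ≤
      (1 - x) ^ (n - i) * x ^ i * ((1 - y) ^ (n - k) * y ^ k) := by
  obtain ⟨d, rfl⟩ : ∃ d, k = i + d := ⟨k - i, by omega⟩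
  obtain ⟨e, rfl⟩ : ∃ e, n = i + d + e := ⟨n - (i + d), by omega⟩
  have h1 : i + d + e - i = d + e := by omega
  have h2 : i + d + e - (i + d) = e := by omega
  rw [h1, h2]
  have hx1 : 0 ≤ 1 - x := by linarith
  have hy0 : 0 ≤ y := le_trans hx hxy
  have hy1 : 0 ≤ 1 - y := by linarith
  have key : ((1 - y) * x) ^ d ≤ ((1 - x) * y) ^ d :=
    pow_le_pow_left₀ (mul_nonneg hy1 hx) (by nlinarith) d
  calc (1 - y) ^ (d + e) * y ^ i * ((1 - x) ^ e * x ^ (i + d))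
      = (x * y) ^ i * ((1 - x) * (1 - y)) ^ e * ((1 - y) * x) ^ d := by
        rw [pow_add, pow_add, mul_pow, mul_pow, mul_pow]; ring
    _ ≤ (x * y) ^ i * ((1 - x) * (1 - y)) ^ e * ((1 - x) * y) ^ d := by
        apply mul_le_mul_of_nonneg_left key
        exact mul_nonneg (pow_nonneg (mul_nonneg hx hy0) i)
          (pow_nonneg (mul_nonneg hx1 hy1) e)
    _ = (1 - x) ^ (d + e) * x ^ i * ((1 - y) ^ e * y ^ (i + d)) := by
        rw [pow_add, pow_add, mul_pow, mul_pow, mul_pow]; ring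

lemma stmt14_tp2 (n a b : ℕ) (hab : a ≤ b) (hbn : b ≤ n) {x y : ℝ}
    (hx : 0 ≤ x) (hy : y ≤ 1) (hxy : x ≤ y) :
    stmt14_Zf n a y * stmt14_Zf n b x ≤ stmt14_Zf n a x * stmt14_Zf n b y := by
  have hy0 : 0 ≤ y := le_trans hx hxy
  have hx1 : x ≤ 1 := le_trans hxy hy
  have hsplit : ∀ t : ℝ, stmt14_Zf n b t
      = stmt14_Zf n a t + ∑ i ∈ Finset.Ico (a+1) (b+1),
          (n.choose i : ℝ) * (1 - t) ^ (n - i) * t ^ i := by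
    intro t
    rw [stmt14_Zf, stmt14_Zf, Finset.range_eq_Ico,
      ← Finset.sum_Ico_consecutive _ (Nat.zero_le (a+1)) (show a+1 ≤ b+1 by omega), Finset.range_eq_Ico]
  rw [hsplit, hsplit]
  have hR : stmt14_Zf n a y * (∑ i ∈ Finset.Ico (a+1) (b+1),
        (n.choose i : ℝ) * (1 - x) ^ (n - i) * x ^ i)
      ≤ stmt14_Zf n a x * (∑ i ∈ Finset.Ico (a+1) (b+1),
        (n.choose i : ℝ) * (1 - y) ^ (n - i) * y ^ i) := by
    rw [stmt14_Zf, stmt14_Zf, Finset.sum_mul_sum, Finset.sum_mul_sum]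
    apply Finset.sum_le_sum
    intro i hi
    apply Finset.sum_le_sum
    intro k hk
    rw [Finset.mem_range] at hi
    rw [Finset.mem_Ico] at hk
    have h := stmt14_elem n i k (by omega) (by omega) hx hy hxy
    have hnn : (0:ℝ) ≤ (n.choose i : ℝ) * (n.choose k : ℝ) := by positivity
    calc (n.choose i : ℝ) * (1 - y) ^ (n - i) * y ^ i * ((n.choose k : ℝ) * (1 - x) ^ (n - k) * x ^ k)
        = ((n.choose i : ℝ) * (n.choose k : ℝ)) * ((1 - y) ^ (n - i) * y ^ i * ((1 - x) ^ (n - k) * x ^ k)) := by ring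
      _ ≤ ((n.choose i : ℝ) * (n.choose k : ℝ)) * ((1 - x) ^ (n - i) * x ^ i * ((1 - y) ^ (n - k) * y ^ k)) :=
          mul_le_mul_of_nonneg_left h hnn
      _ = (n.choose i : ℝ) * (1 - x) ^ (n - i) * x ^ i * ((n.choose k : ℝ) * (1 - y) ^ (n - k) * y ^ k) := by ring
  nlinarith [stmt14_Zf_nonneg n a hx hx1, stmt14_Zf_nonneg n a hy0 hy,
    mul_comm (stmt14_Zf n a y) (stmt14_Zf n a x)]

lemma stmt14_Zf_hasDerivAt (m : ℕ) :
    ∀ k, k ≤ m → ∀ x : ℝ, HasDerivAt (stmt14_Zf (m+1) k)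
      (-((m+1 : ℕ) : ℝ) * (m.choose k : ℝ) * x ^ k * (1-x) ^ (m-k)) x := by
  intro k
  induction k with
  | zero =>
    intro _ x
    have h0 : stmt14_Zf (m+1) 0 = fun x : ℝ => (1 - x) ^ (m+1) := by
      funext t
      simp [stmt14_Zf]
    rw [h0]
    have h1 : HasDerivAt (fun x : ℝ => 1 - x) (-1) x := by
      simpa using (hasDerivAt_id x).const_sub 1
    have h2 : HasDerivAt (fun x : ℝ => (1 - x) ^ (m+1)) _ x := h1.fun_pow (m+1)
    convert h2 using 1
    simp
    ring
  | succ k ih =>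
    intro hk x
    have hkm : k ≤ m := by omega
    obtain ⟨d, rfl⟩ : ∃ d, m = k + 1 + d := ⟨m - (k+1), by omega⟩
    have e0 : k + 1 + d + 1 - (k + 1) = d + 1 := by omega
    have e1 : k + 1 + d - k = d + 1 := by omega
    have e3 : k + 1 + d - (k + 1) = d := by omega
    have hfun : stmt14_Zf (k+1+d+1) (k+1) = fun t : ℝ =>
        stmt14_Zf (k+1+d+1) k t
          + ((k+1+d+1).choose (k+1) : ℝ) * ((1 - t) ^ (d+1) * t ^ (k+1)) := by
      funext t
      rw [stmt14_Zf, Finset.sum_range_succ, e0, stmt14_Zf]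
      ring
    rw [hfun]
    have h1 : HasDerivAt (fun t : ℝ => 1 - t) (-1) x := by
      simpa using (hasDerivAt_id x).const_sub 1
    have h2 : HasDerivAt (fun t : ℝ => (1 - t) ^ (d+1) * t ^ (k+1))
        (((d+1 : ℕ) : ℝ) * (1-x) ^ d * (-1) * x ^ (k+1)
          + (1-x) ^ (d+1) * (((k+1 : ℕ) : ℝ) * x ^ k)) x := by
      have ha : HasDerivAt (fun t : ℝ => (1 - t) ^ (d+1)) _ x := h1.fun_pow (d+1)
      have hb := hasDerivAt_pow (k+1) x
      have hm : HasDerivAt (fun t : ℝ => (1 - t) ^ (d+1) * t ^ (k+1)) _ x := ha.fun_mul hb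
      simpa using hm
    have h3 : HasDerivAt (fun t : ℝ => stmt14_Zf (k+1+d+1) k t
        + ((k+1+d+1).choose (k+1) : ℝ) * ((1 - t) ^ (d+1) * t ^ (k+1))) _ x := (ih hkm x).fun_add (h2.const_mul (((k+1+d+1).choose (k+1) : ℝ)))
    rw [e1] at h3
    convert h3 using 1
    rw [e3]
    have hc1 : ((k+1+d+1).choose (k+1) : ℝ) * ((k+1 : ℕ) : ℝ)
        = ((k+1+d+1 : ℕ) : ℝ) * ((k+1+d).choose k : ℝ) := by
      have := Nat.add_one_mul_choose_eq (k+1+d) k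
      exact_mod_cast congrArg (Nat.cast : ℕ → ℝ) this.symm
    have hc2 : ((k+1+d+1).choose (k+1) : ℝ) * ((d+1 : ℕ) : ℝ)
        = ((k+1+d+1 : ℕ) : ℝ) * ((k+1+d).choose (k+1) : ℝ) := by
      have h5 : (k+1+d+1).choose (k+1+1) * (k+1+1) = (k+1+d+1).choose (k+1) * ((k+1+d+1) - (k+1)) :=
        Nat.choose_succ_right_eq (k+1+d+1) (k+1)
      have h6 : (k+1+d+1) * (k+1+d).choose (k+1) = (k+1+d+1).choose (k+1+1) * (k+1+1) := by
        have := Nat.add_one_mul_choose_eq (k+1+d) (k+1)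
        simpa using this
      have h7 : (k+1+d+1) - (k+1) = d + 1 := by omega
      rw [h7] at h5
      have : (k+1+d+1).choose (k+1) * (d+1) = (k+1+d+1) * (k+1+d).choose (k+1) := by omega
      exact_mod_cast congrArg (Nat.cast : ℕ → ℝ) this
    push_cast at hc1 hc2 ⊢
    linear_combination ((1-x)^d * x^(k+1)) * hc2 - ((1-x)^(d+1) * x^k) * hc1

lemma stmt14_Zf_continuous (n k : ℕ) : Continuous (stmt14_Zf n k) := by
  apply continuous_finset_sum
  intro i _
  exact (continuous_const.mul ((continuous_const.sub continuous_id).pow _)).mul (continuous_pow i)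

lemma stmt14_Zf_strictAnti (m k : ℕ) (hk : k ≤ m) :
    StrictAntiOn (stmt14_Zf (m+1) k) (Set.Icc 0 1) := by
  apply strictAntiOn_of_deriv_neg (convex_Icc 0 1) (stmt14_Zf_continuous (m+1) k).continuousOn
  intro x hx
  rw [interior_Icc, Set.mem_Ioo] at hx
  rw [(stmt14_Zf_hasDerivAt m k hk x).deriv]
  have h1 : (0:ℝ) < x ^ k := pow_pos hx.1 k
  have h2 : (0:ℝ) < (1 - x) ^ (m - k) := pow_pos (by linarith [hx.2]) (m - k)
  have h3 : (0:ℝ) < (m.choose k : ℝ) := by exact_mod_cast Nat.choose_pos hk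
  have h4 : (0:ℝ) < ((m+1 : ℕ) : ℝ) := by positivity
  nlinarith [mul_pos (mul_pos (mul_pos h4 h3) h1) h2]

lemma stmt14_cross_nonneg (s : Finset ℕ) (w zx zy u : ℕ → ℝ)
    (hw : ∀ i ∈ s, 0 ≤ w i)
    (hmono : ∀ i ∈ s, ∀ k ∈ s, i ≤ k → u k ≤ u i)
    (htp2 : ∀ i ∈ s, ∀ k ∈ s, i ≤ k → zy i * zx k ≤ zx i * zy k) :
    (∑ i ∈ s, w i * zy i * u i) * (∑ i ∈ s, w i * zx i) ≤
      (∑ i ∈ s, w i * zx i * u i) * (∑ i ∈ s, w i * zy i) := by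
  have expand : (∑ i ∈ s, w i * zx i * u i) * (∑ i ∈ s, w i * zy i)
      - (∑ i ∈ s, w i * zy i * u i) * (∑ i ∈ s, w i * zx i)
      = ∑ i ∈ s, ∑ k ∈ s, (w i * w k * u i * (zx i * zy k - zy i * zx k)) := by
    rw [Finset.sum_mul_sum, Finset.sum_mul_sum, ← Finset.sum_sub_distrib]
    apply Finset.sum_congr rfl
    intro i _
    rw [← Finset.sum_sub_distrib]
    apply Finset.sum_congr rfl
    intro k _
    ring
  have swap : ∑ i ∈ s, ∑ k ∈ s, (w i * w k * u i * (zx i * zy k - zy i * zx k))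
      = ∑ i ∈ s, ∑ k ∈ s, (w k * w i * u k * (zx k * zy i - zy k * zx i)) :=
    Finset.sum_comm
  have pair : ∀ i ∈ s, ∀ k ∈ s,
      0 ≤ w i * w k * u i * (zx i * zy k - zy i * zx k)
        + w k * w i * u k * (zx k * zy i - zy k * zx i) := by
    intro i hi k hk
    have hqq : 0 ≤ w i * w k := mul_nonneg (hw i hi) (hw k hk)
    have hre : w i * w k * u i * (zx i * zy k - zy i * zx k)
        + w k * w i * u k * (zx k * zy i - zy k * zx i)
        = (w i * w k) * ((u i - u k) * (zx i * zy k - zy i * zx k)) := by ring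
    rw [hre]
    apply mul_nonneg hqq
    rcases le_total i k with h | h
    · exact mul_nonneg (sub_nonneg.2 (hmono i hi k hk h)) (sub_nonneg.2 (htp2 i hi k hk h))
    · have h1 : u i - u k ≤ 0 := sub_nonpos.2 (hmono k hk i hi h)
      have h2 : zx i * zy k - zy i * zx k ≤ 0 := by
        have := htp2 k hk i hi h
        nlinarith [this]
      nlinarith [mul_nonneg (neg_nonneg.2 h1) (neg_nonneg.2 h2)]
  have h2 : 0 ≤ 2 * ∑ i ∈ s, ∑ k ∈ s, (w i * w k * u i * (zx i * zy k - zy i * zx k)) := by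
    have : 2 * ∑ i ∈ s, ∑ k ∈ s, (w i * w k * u i * (zx i * zy k - zy i * zx k))
        = ∑ i ∈ s, ∑ k ∈ s, ((w i * w k * u i * (zx i * zy k - zy i * zx k))
            + (w k * w i * u k * (zx k * zy i - zy k * zx i))) := by
      rw [two_mul]
      nth_rewrite 2 [swap]
      rw [← Finset.sum_add_distrib]
      exact Finset.sum_congr rfl fun i _ => Finset.sum_add_distrib.symm
    rw [this]
    apply Finset.sum_nonneg
    intro i hi
    exact Finset.sum_nonneg fun k hk => pair i hi k hk
  linarith [expand, h2]

lemma stmt14_final (A pbar Sx Sy Ux Uy : ℝ) (hA : 0 < A)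
    (hU : Uy < Ux) (hcross : Uy * Sx ≤ Ux * Sy) :
    (A * pbar + (pbar * Sx - Ux)) * (A + Sy) < (A * pbar + (pbar * Sy - Uy)) * (A + Sx) := by
  nlinarith [mul_pos hA (sub_pos.2 hU)]

/-- General demand oligopoly: under the stated assumptions, the map `G` is continuous and
strictly increasing on `[0,1]`. -/
theorem stmt14 (q : ℕ → ℝ) (δ pbar : ℝ)
    (hqnn : ∀ i, 0 ≤ q i) (hqsummable : Summable q) (hqsum : ∑' i, q i = 1)
    (hq0 : q 0 < 1) (hδ0 : 0 < δ) (hδ1 : δ ≤ 1) (hpbar : 0 < pbar)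
    (V : ℕ → ℕ → ℝ)
    (hV0 : ∀ M : ℕ, 1 ≤ M → V M 0 = 0)
    (hVrec : ∀ M T : ℕ, 1 ≤ M → 1 ≤ T →
      V M T = ∑ i ∈ Finset.range M, q i * δ * V (M - i) (T - 1) + (∑' i, q (M + i)) * pbar)
    (N T : ℕ) (hN : 2 ≤ N) (hT : 1 ≤ T)
    (htail : 0 < ∑' i, q (N + i))
    (hqj : ∃ j : ℕ, 1 ≤ j ∧ j ≤ N - 1 ∧ 0 < q j)
    (hVlt : ∀ i : ℕ, 1 ≤ i → i ≤ N - 1 → δ * V (N - i) (T - 1) < pbar)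
    (Z : ℕ → ℝ → ℝ)
    (hZ : ∀ (j : ℕ) (x : ℝ), Z j x =
      ∑ i ∈ Finset.range (j + 1), ((N - 1).choose i : ℝ) * (1 - x) ^ (N - 1 - i) * x ^ i)
    (G : ℝ → ℝ)
    (hG : ∀ x : ℝ, G x =
      ((∑' i, q (N + i)) * pbar +
        ∑ i ∈ Finset.Icc 1 (N - 1), q i * Z (i - 1) x * (δ * V (N - i) (T - 1))) /
      ((∑' i, q (N + i)) + ∑ i ∈ Finset.Icc 1 (N - 1), q i * Z (i - 1) x)) :
    ContinuousOn G (Set.Icc 0 1) ∧ StrictMonoOn G (Set.Icc 0 1) := by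
  -- Z is the explicit polynomial
  have hZeq : ∀ (j : ℕ) (t : ℝ), Z j t = stmt14_Zf (N-1) j t := by
    intro j t
    rw [hZ, stmt14_Zf]
  have hZcont : ∀ k, Continuous fun t => Z k t := by
    intro k
    have : (fun t => Z k t) = stmt14_Zf (N-1) k := funext fun t => hZeq k t
    rw [this]
    exact stmt14_Zf_continuous _ _
  have hZanti : ∀ k, k ≤ N - 2 → StrictAntiOn (fun t => Z k t) (Set.Icc 0 1) := by
    intro k hk
    have h := stmt14_Zf_strictAnti (N-2) k hk
    have hm : N - 2 + 1 = N - 1 := by omega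
    rw [hm] at h
    intro a ha b hb hab
    simpa only [hZeq] using h ha hb hab
  have hZnn : ∀ (k : ℕ) (t : ℝ), t ∈ Set.Icc (0:ℝ) 1 → 0 ≤ Z k t := by
    intro k t ht
    rw [hZeq]
    exact stmt14_Zf_nonneg _ _ ht.1 ht.2
  -- tail sums
  have htails : ∀ M : ℕ, Summable fun i => q (M + i) := by
    intro M
    have := (summable_nat_add_iff M).2 hqsummable
    simpa [add_comm] using this
  have hsplit : ∀ M : ℕ, (∑ i ∈ Finset.range M, q i) + ∑' i, q (M + i) = 1 := by
    intro M
    have hs := Summable.sum_add_tsum_nat_add M hqsummable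
    rw [hqsum] at hs
    rw [← hs]
    congr 1
    exact tsum_congr fun i => by rw [add_comm]
  have htshift : ∀ M : ℕ, ∑' i, q (M + i) = q M + ∑' i, q (M + 1 + i) := by
    intro M
    have h0 := Summable.tsum_eq_zero_add (htails M)
    simp only [add_zero] at h0
    rw [h0]
    congr 1
    apply tsum_congr
    intro i
    congr 1
    omega
  have htailnn : ∀ M : ℕ, 0 ≤ ∑' i, q (M + i) := fun M => tsum_nonneg fun i => hqnn _
  -- V facts
  have hVnn : ∀ t M, 1 ≤ M → 0 ≤ V M t := by
    intro t
    induction t with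
    | zero => intro M hM; rw [hV0 M hM]
    | succ t ih =>
      intro M hM
      rw [hVrec M (t+1) hM (by omega)]
      simp only [Nat.add_sub_cancel]
      apply add_nonneg
      · apply Finset.sum_nonneg
        intro i hi
        rw [Finset.mem_range] at hi
        exact mul_nonneg (mul_nonneg (hqnn i) hδ0.le) (ih (M - i) (by omega))
      · exact mul_nonneg (htailnn M) hpbar.le
  have hVub : ∀ t M, 1 ≤ M → V M t ≤ pbar := by
    intro t
    induction t with
    | zero => intro M hM; rw [hV0 M hM]; exact hpbar.le
    | succ t ih =>
      intro M hM
      rw [hVrec M (t+1) hM (by omega)]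
      simp only [Nat.add_sub_cancel]
      have h1 : ∑ i ∈ Finset.range M, q i * δ * V (M-i) t ≤ ∑ i ∈ Finset.range M, q i * pbar := by
        apply Finset.sum_le_sum
        intro i hi
        rw [Finset.mem_range] at hi
        have hv1 := ih (M-i) (by omega)
        have hv0 := hVnn t (M-i) (by omega)
        have hδV : δ * V (M-i) t ≤ pbar := by nlinarith
        rw [mul_assoc]
        exact mul_le_mul_of_nonneg_left hδV (hqnn i)
      calc ∑ i ∈ Finset.range M, q i * δ * V (M-i) t + (∑' i, q (M+i)) * pbar
          ≤ ∑ i ∈ Finset.range M, q i * pbar + (∑' i, q (M+i)) * pbar := add_le_add_left h1 _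
        _ = ((∑ i ∈ Finset.range M, q i) + ∑' i, q (M+i)) * pbar := by
            rw [add_mul, Finset.sum_mul]
        _ = pbar := by rw [hsplit M, one_mul]
  have hVmono : ∀ t M, 1 ≤ M → V (M+1) t ≤ V M t := by
    intro t
    induction t with
    | zero => intro M hM; rw [hV0 M hM, hV0 (M+1) (by omega)]
    | succ t ih =>
      intro M hM
      rw [hVrec (M+1) (t+1) (by omega) (by omega), hVrec M (t+1) hM (by omega)]
      simp only [Nat.add_sub_cancel]
      rw [Finset.sum_range_succ]
      have hsum : ∑ i ∈ Finset.range M, q i * δ * V (M+1-i) t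
          ≤ ∑ i ∈ Finset.range M, q i * δ * V (M-i) t := by
        apply Finset.sum_le_sum
        intro i hi
        rw [Finset.mem_range] at hi
        have e : M + 1 - i = (M - i) + 1 := by omega
        rw [e]
        exact mul_le_mul_of_nonneg_left (ih (M-i) (by omega)) (mul_nonneg (hqnn i) hδ0.le)
      have hlast : q M * δ * V (M+1-M) t ≤ q M * pbar := by
        have e : M + 1 - M = 1 := by omega
        rw [e]
        have h1 := hVub t 1 le_rfl
        have h2 := hVnn t 1 le_rfl
        have hδV : δ * V 1 t ≤ pbar := by nlinarith
        rw [mul_assoc]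
        exact mul_le_mul_of_nonneg_left hδV (hqnn M)
      rw [htshift M, add_mul]
      linarith [hsum, hlast]
  have hVanti : ∀ t M M', 1 ≤ M → M ≤ M' → V M' t ≤ V M t := by
    intro t M M' hM h
    obtain ⟨d, rfl⟩ : ∃ d, M' = M + d := ⟨M' - M, by omega⟩
    clear h
    induction d with
    | zero => exact le_rfl
    | succ d ih =>
      have e : M + (d+1) = (M+d) + 1 := by omega
      rw [e]
      exact le_trans (hVmono t (M+d) (by omega)) ih
  -- denominator positivity
  have hD : ∀ x ∈ Set.Icc (0:ℝ) 1,
      0 < (∑' i, q (N+i)) + ∑ i ∈ Finset.Icc 1 (N-1), q i * Z (i-1) x := by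
    intro x hx
    apply add_pos_of_pos_of_nonneg htail
    apply Finset.sum_nonneg
    intro i _
    exact mul_nonneg (hqnn i) (hZnn (i-1) x hx)
  constructor
  · -- continuity
    have hGfun : G = fun x => ((∑' i, q (N + i)) * pbar +
        ∑ i ∈ Finset.Icc 1 (N - 1), q i * Z (i - 1) x * (δ * V (N - i) (T - 1))) /
      ((∑' i, q (N + i)) + ∑ i ∈ Finset.Icc 1 (N - 1), q i * Z (i - 1) x) := funext hG
    rw [hGfun]
    apply ContinuousOn.div
    · apply Continuous.continuousOn
      apply continuous_const.add
      apply continuous_finset_sum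
      intro i _
      exact (continuous_const.mul (hZcont (i-1))).mul continuous_const
    · apply Continuous.continuousOn
      apply continuous_const.add
      apply continuous_finset_sum
      intro i _
      exact continuous_const.mul (hZcont (i-1))
    · intro x hx
      exact (hD x hx).ne'
  · -- strict monotonicity
    intro x hx y hy hxy
    obtain ⟨hx0, hx1⟩ := hx
    obtain ⟨hy0, hy1⟩ := hy
    rw [hG x, hG y, div_lt_div_iff₀ (hD x ⟨hx0, hx1⟩) (hD y ⟨hy0, hy1⟩)]
    have hWx : (∑ i ∈ Finset.Icc 1 (N - 1), q i * Z (i - 1) x * (δ * V (N - i) (T - 1)))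
        = pbar * (∑ i ∈ Finset.Icc 1 (N - 1), q i * Z (i - 1) x)
          - ∑ i ∈ Finset.Icc 1 (N - 1), q i * Z (i - 1) x * (pbar - δ * V (N - i) (T - 1)) := by
      rw [Finset.mul_sum, ← Finset.sum_sub_distrib]
      exact Finset.sum_congr rfl fun i _ => by ring
    have hWy : (∑ i ∈ Finset.Icc 1 (N - 1), q i * Z (i - 1) y * (δ * V (N - i) (T - 1)))
        = pbar * (∑ i ∈ Finset.Icc 1 (N - 1), q i * Z (i - 1) y)
          - ∑ i ∈ Finset.Icc 1 (N - 1), q i * Z (i - 1) y * (pbar - δ * V (N - i) (T - 1)) := by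
      rw [Finset.mul_sum, ← Finset.sum_sub_distrib]
      exact Finset.sum_congr rfl fun i _ => by ring
    rw [hWx, hWy]
    apply stmt14_final _ _ _ _ _ _ htail
    · -- Uy < Ux
      apply Finset.sum_lt_sum
      · intro i hi
        rw [Finset.mem_Icc] at hi
        have hzlt : Z (i-1) y ≤ Z (i-1) x :=
          (hZanti (i-1) (by omega) ⟨hx0, hx1⟩ ⟨hy0, hy1⟩ hxy).le
        have hup : 0 ≤ pbar - δ * V (N-i) (T-1) := (sub_pos.2 (hVlt i hi.1 hi.2)).le
        nlinarith [mul_nonneg (hqnn i) hup]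
      · obtain ⟨j, hj1, hj2, hjq⟩ := hqj
        refine ⟨j, Finset.mem_Icc.2 ⟨hj1, hj2⟩, ?_⟩
        have hzlt : Z (j-1) y < Z (j-1) x :=
          hZanti (j-1) (by omega) ⟨hx0, hx1⟩ ⟨hy0, hy1⟩ hxy
        have hup : 0 < pbar - δ * V (N-j) (T-1) := sub_pos.2 (hVlt j hj1 hj2)
        nlinarith [mul_pos hjq hup]
    · -- cross inequality
      apply stmt14_cross_nonneg (Finset.Icc 1 (N-1)) q
        (fun i => Z (i-1) x) (fun i => Z (i-1) y)
        (fun i => pbar - δ * V (N-i) (T-1))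
        (fun i _ => hqnn i)
      · intro i hi k hk hik
        rw [Finset.mem_Icc] at hi hk
        have hv : V (N-i) (T-1) ≤ V (N-k) (T-1) := hVanti (T-1) (N-k) (N-i) (by omega) (by omega)
        have := mul_le_mul_of_nonneg_left hv hδ0.le
        linarith
      · intro i hi k hk hik
        rw [Finset.mem_Icc] at hi hk
        simp only [hZeq]
        exact stmt14_tp2 (N-1) (i-1) (k-1) (by omega) (by omega) hx0 hy1 hxy.le
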